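/- Let G be a countable group, G₁ a finite subgroup with proper left invariant metric d_{G₁}, and S ⊂ G a symmetric subset disjoint from G₁ such that G₁ ∪ S generates G. If w is a weight function on G₁ ∪ S ∪ S⁻¹ with w(g) = ‖g‖_{G₁} for g ∈ G₁ and w(g) ≥ diam(G₁) for g ∈ S ∪ S⁻¹, then the norm ‖g‖_w = min{Σᵢ w(sᵢ) : g = s₁⋯sₙ, sᵢ ∈ G₁ ∪ S ∪ S⁻¹} restricts on G₁ to ‖·‖_{G₁}. -/

import Mathlib

/-- Extension lemma for norms on countable groups: if the weight function `w` agrees with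
the norm of the finite subgroup `H` on `H` and is at least `diam H` on the symmetric set
`S` disjoint from `H`, then the induced word-weight norm restricts on `H` to the norm of
`H`. -/
theorem norm_extension {G : Type*} [Group G] [Countable G]
    (H : Subgroup G) (hHfin : (H : Set G).Finite)
    (N₁ : G → ℝ)
    (hN0 : ∀ g ∈ H, (N₁ g = 0 ↔ g = 1))
    (hNnn : ∀ g ∈ H, 0 ≤ N₁ g)
    (hNsymm : ∀ g ∈ H, N₁ g⁻¹ = N₁ g)
    (hNtri : ∀ g ∈ H, ∀ h ∈ H, N₁ (g * h) ≤ N₁ g + N₁ h)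
    (S : Set G) (hSsymm : ∀ x ∈ S, x⁻¹ ∈ S) (hdisj : S ∩ (H : Set G) = ∅)
    (hgen : Subgroup.closure ((H : Set G) ∪ S) = ⊤)
    (w : G → ℝ)
    (hw0 : ∀ g ∈ (H : Set G) ∪ S, ((w g = 0 ↔ g = 1) ∧ w g⁻¹ = w g ∧ 0 ≤ w g))
    (hwH : ∀ g ∈ H, w g = N₁ g)
    (hwS : ∀ g ∈ S, sSup (N₁ '' (H : Set G)) ≤ w g) :
    ∀ g ∈ H,
      sInf {r : ℝ | ∃ l : List G, (∀ x ∈ l, x ∈ (H : Set G) ∪ S) ∧ l.prod = g ∧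
        (l.map w).sum = r} = N₁ g := by
  intro g hg
  have hN1 : N₁ 1 = 0 := (hN0 1 H.one_mem).2 rfl
  -- product of a list of elements of H
  have key : ∀ l : List G, (∀ x ∈ l, x ∈ (H : Set G)) →
      l.prod ∈ H ∧ N₁ l.prod ≤ (l.map N₁).sum := by
    intro l
    induction l with
    | nil => intro _; simpa using le_of_eq hN1
    | cons a t ih =>
      intro hmem
      have ha : a ∈ H := hmem a (by simp)
      obtain ⟨htH, htle⟩ := ih (fun x hx => hmem x (by simp [hx]))
      refine ⟨H.mul_mem ha htH, ?_⟩
      calc N₁ (a * t.prod) ≤ N₁ a + N₁ t.prod := hNtri a ha t.prod htH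
        _ ≤ N₁ a + (t.map N₁).sum := by linarith
        _ = ((a :: t).map N₁).sum := by simp
  -- every element of the set is ≥ N₁ g
  have lb : ∀ r ∈ {r : ℝ | ∃ l : List G, (∀ x ∈ l, x ∈ (H : Set G) ∪ S) ∧ l.prod = g ∧
      (l.map w).sum = r}, N₁ g ≤ r := by
    rintro r ⟨l, hlmem, hlprod, rfl⟩
    have hnn : ∀ x ∈ l.map w, 0 ≤ x := by
      intro x hx
      obtain ⟨a, ha, rfl⟩ := List.mem_map.1 hx
      exact (hw0 a (hlmem a ha)).2.2
    by_cases hall : ∀ x ∈ l, x ∈ (H : Set G)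
    · obtain ⟨_, hle⟩ := key l hall
      have : (l.map w).sum = (l.map N₁).sum := by
        congr 1
        exact List.map_congr_left (fun x hx => hwH x (hall x hx))
      rw [this, ← hlprod]
      exact hle
    · push_neg at hall
      obtain ⟨s, hsl, hsH⟩ := hall
      have hsS : s ∈ S := (hlmem s hsl).resolve_left hsH
      have h1 : w s ∈ l.map w := List.mem_map.2 ⟨s, hsl, rfl⟩
      have h2 : w s ≤ (l.map w).sum := List.single_le_sum hnn _ h1
      have h3 : N₁ g ≤ sSup (N₁ '' (H : Set G)) := by
        apply le_csSup ((hHfin.image N₁).bddAbove)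
        exact ⟨g, hg, rfl⟩
      linarith [hwS s hsS]
  apply le_antisymm
  · apply csInf_le ⟨N₁ g, lb⟩
    exact ⟨[g], by simp [Set.mem_union, hg, hwH g hg]⟩
  · exact le_csInf ⟨N₁ g, [g], by simp [Set.mem_union, hg, hwH g hg]⟩ lb
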